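/- Let 0 < p₀ < q < 1 and let X₁, X₂, … be i.i.d. Bernoulli(p₀) random variables with S_n = ∑_{i=1}^n X_i. Then lim_{n→∞} −(1/n)·log P(S_n ≥ n·q) = q·log(q/p₀) + (1−q)·log((1−q)/(1−p₀)). -/

import Mathlib

open MeasureTheory ProbabilityTheory Filter Finset

private lemma step_up (n k j : ℕ) (hk : k ≤ n) (hj : j < k) :
    n.choose j * k ^ j * (n - k) ^ (n - j) ≤
      n.choose (j+1) * k ^ (j+1) * (n - k) ^ (n - (j+1)) := by
  have h1 : n - j = (n - (j+1)) + 1 := by omega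
  rw [h1, pow_succ]
  have key : n.choose j * (n - k) ≤ n.choose (j+1) * k := by
    calc n.choose j * (n - k) ≤ n.choose j * (n - j) := Nat.mul_le_mul le_rfl (by omega)
      _ = n.choose (j+1) * (j+1) := (Nat.choose_succ_right_eq n j).symm
      _ ≤ n.choose (j+1) * k := Nat.mul_le_mul le_rfl (by omega)
  calc n.choose j * k ^ j * ((n-k)^(n-(j+1)) * (n-k))
      = (n.choose j * (n-k)) * (k^j * (n-k)^(n-(j+1))) := by ring
    _ ≤ (n.choose (j+1) * k) * (k^j * (n-k)^(n-(j+1))) := Nat.mul_le_mul key le_rfl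
    _ = n.choose (j+1) * k^(j+1) * (n-k)^(n-(j+1)) := by ring

private lemma step_down (n k j : ℕ) (hk2 : k ≤ j) (hj : j < n) :
    n.choose (j+1) * k ^ (j+1) * (n - k) ^ (n - (j+1)) ≤
      n.choose j * k ^ j * (n - k) ^ (n - j) := by
  have h1 : n - j = (n - (j+1)) + 1 := by omega
  rw [h1, pow_succ]
  have key : n.choose (j+1) * k ≤ n.choose j * (n - k) := by
    calc n.choose (j+1) * k ≤ n.choose (j+1) * (j+1) := Nat.mul_le_mul le_rfl (by omega)
      _ = n.choose j * (n - j) := Nat.choose_succ_right_eq n j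
      _ ≤ n.choose j * (n - k) := Nat.mul_le_mul le_rfl (by omega)
  calc n.choose (j+1) * k^(j+1) * (n-k)^(n-(j+1))
      = (n.choose (j+1) * k) * (k^j * (n-k)^(n-(j+1))) := by ring
    _ ≤ (n.choose j * (n-k)) * (k^j * (n-k)^(n-(j+1))) := Nat.mul_le_mul key le_rfl
    _ = n.choose j * k^j * ((n-k)^(n-(j+1)) * (n-k)) := by ring

private lemma term_le (n k : ℕ) (hk : k ≤ n) : ∀ j, j ≤ n →
    n.choose j * k ^ j * (n - k) ^ (n - j) ≤ n.choose k * k ^ k * (n - k) ^ (n - k) := by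
  have up : ∀ d j, j + d = k → n.choose j * k ^ j * (n - k) ^ (n - j) ≤
      n.choose k * k ^ k * (n - k) ^ (n - k) := by
    intro d
    induction d with
    | zero =>
        intro j hj
        have : j = k := by omega
        subst this; exact le_rfl
    | succ d ih =>
        intro j hj
        exact le_trans (step_up n k j hk (by omega)) (ih (j+1) (by omega))
  have down : ∀ d j, j = k + d → j ≤ n → n.choose j * k ^ j * (n - k) ^ (n - j) ≤
      n.choose k * k ^ k * (n - k) ^ (n - k) := by
    intro d
    induction d with
    | zero =>
        intro j hj _
        have : j = k := by omega
        subst this; exact le_rfl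
    | succ d ih =>
        intro j hj hjn
        have hj' : j = (k + d) + 1 := by omega
        subst hj'
        exact le_trans (step_down n k (k+d) (by omega) (by omega)) (ih (k+d) rfl (by omega))
  intro j hj
  rcases le_total j k with h | h
  · exact up (k - j) j (by omega)
  · exact down (j - k) j (by omega) hj

private lemma nat_max_term (n k : ℕ) (hk : k ≤ n) :
    n ^ n ≤ (n + 1) * (n.choose k * k ^ k * (n - k) ^ (n - k)) := by
  calc n ^ n = (k + (n - k)) ^ n := by rw [Nat.add_sub_cancel' hk]
    _ = ∑ j ∈ Finset.range (n+1), k ^ j * (n-k) ^ (n-j) * n.choose j := add_pow k (n-k) n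
    _ ≤ ∑ _j ∈ Finset.range (n+1), n.choose k * k ^ k * (n - k) ^ (n - k) := by
        refine Finset.sum_le_sum fun j hj => ?_
        have h := term_le n k hk j (by simpa [Nat.lt_succ_iff] using hj)
        calc k ^ j * (n-k) ^ (n-j) * n.choose j
            = n.choose j * k ^ j * (n-k) ^ (n-j) := by ring
          _ ≤ _ := h
    _ = (n + 1) * (n.choose k * k ^ k * (n - k) ^ (n - k)) := by
        rw [Finset.sum_const, Finset.card_range, smul_eq_mul]

private lemma lower_bound {Ω : Type*} [MeasurableSpace Ω] (P : Measure Ω)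
    [IsProbabilityMeasure P] (p₀ : ℝ) (hp₀0 : 0 < p₀) (hp₀1 : p₀ < 1)
    (X : ℕ → Ω → ℝ) (hmeas : ∀ i, Measurable (X i))
    (hindep : iIndepFun X P)
    (h01 : ∀ i ω, X i ω = 0 ∨ X i ω = 1)
    (hlaw : ∀ i, P {ω | X i ω = 1} = ENNReal.ofReal p₀)
    (n k : ℕ) (hk : k ≤ n) (q : ℝ) (hq : (n:ℝ) * q ≤ k) :
    ENNReal.ofReal ((n.choose k : ℝ) * p₀ ^ k * (1 - p₀) ^ (n - k)) ≤
      P {ω | (n : ℝ) * q ≤ ∑ i ∈ Finset.range n, X i ω} := by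
  classical
  have hlaw1 : ∀ i, P (X i ⁻¹' {1}) = ENNReal.ofReal p₀ := fun i => hlaw i
  have hlaw0 : ∀ i, P (X i ⁻¹' {0}) = ENNReal.ofReal (1 - p₀) := by
    intro i
    have hc : X i ⁻¹' {0} = (X i ⁻¹' {1})ᶜ := by
      ext ω
      simp only [Set.mem_preimage, Set.mem_singleton_iff, Set.mem_compl_iff]
      rcases h01 i ω with h | h <;> simp [h]
    rw [hc, measure_compl ((hmeas i) (measurableSet_singleton 1)) (measure_ne_top _ _),
      measure_univ, hlaw1 i, ← ENNReal.ofReal_one, ← ENNReal.ofReal_sub _ hp₀0.le]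
  set F : Finset ℕ → Set Ω :=
    fun A => ⋂ i ∈ Finset.range n, X i ⁻¹' {if i ∈ A then (1:ℝ) else 0} with hF
  have hFmeas : ∀ A, MeasurableSet (F A) := by
    intro A
    exact MeasurableSet.biInter (Set.to_countable _)
      (fun i _ => (hmeas i) (measurableSet_singleton _))
  have hFP : ∀ A ∈ Finset.powersetCard k (Finset.range n),
      P (F A) = ENNReal.ofReal p₀ ^ k * ENNReal.ofReal (1 - p₀) ^ (n - k) := by
    intro A hA
    rw [Finset.mem_powersetCard] at hA
    obtain ⟨hsub, hcard⟩ := hA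
    rw [hF]
    rw [hindep.measure_inter_preimage_eq_mul (Finset.range n)
      (fun i _ => measurableSet_singleton _)]
    have : ∀ i ∈ Finset.range n, P (X i ⁻¹' {if i ∈ A then (1:ℝ) else 0}) =
        if i ∈ A then ENNReal.ofReal p₀ else ENNReal.ofReal (1 - p₀) := by
      intro i _
      by_cases h : i ∈ A <;> simp [h, hlaw1 i, hlaw0 i]
    rw [Finset.prod_congr rfl this, Finset.prod_ite, Finset.prod_const, Finset.prod_const]
    have h1 : (Finset.range n).filter (fun i => i ∈ A) = A := by
      rw [Finset.filter_mem_eq_inter, Finset.inter_eq_right.2 hsub]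
    have h2 : ((Finset.range n).filter (fun i => ¬ i ∈ A)).card = n - k := by
      have := Finset.card_filter_add_card_filter_not
        (s := Finset.range n) (p := fun i => i ∈ A)
      rw [h1] at this
      simp only [Finset.card_range] at this
      omega
    rw [h1, hcard, h2]
  have hFsub : ∀ A ∈ Finset.powersetCard k (Finset.range n),
      F A ⊆ {ω | (n : ℝ) * q ≤ ∑ i ∈ Finset.range n, X i ω} := by
    intro A hA ω hω
    rw [Finset.mem_powersetCard] at hA
    simp only [hF, Set.mem_iInter, Set.mem_preimage, Set.mem_singleton_iff] at hω
    have hsum : ∑ i ∈ Finset.range n, X i ω = k := by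
      rw [Finset.sum_congr rfl (fun i hi => hω i hi)]
      rw [Finset.sum_ite_mem, Finset.inter_eq_right.2 hA.1, Finset.sum_const, hA.2]
      simp
    simpa [Set.mem_setOf_eq, hsum] using hq
  have hdisj : Set.PairwiseDisjoint ↑(Finset.powersetCard k (Finset.range n)) F := by
    intro A hA B hB hAB
    rw [Finset.mem_coe] at hA hB
    refine Set.disjoint_left.mpr fun ω hωA hωB => ?_
    have hns : ¬ A ⊆ B := fun hs => hAB (Finset.eq_of_subset_of_card_le hs (by
      rw [(Finset.mem_powersetCard.mp hA).2, (Finset.mem_powersetCard.mp hB).2]))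
    obtain ⟨i, hiA, hiB⟩ := Finset.not_subset.mp hns
    have hin : i ∈ Finset.range n := (Finset.mem_powersetCard.mp hA).1 hiA
    simp only [hF, Set.mem_iInter, Set.mem_preimage, Set.mem_singleton_iff] at hωA hωB
    have e1 := hωA i hin
    have e2 := hωB i hin
    rw [if_pos hiA] at e1
    rw [if_neg hiB] at e2
    rw [e1] at e2
    exact one_ne_zero e2
  calc ENNReal.ofReal ((n.choose k : ℝ) * p₀ ^ k * (1 - p₀) ^ (n - k))
      = ∑ _A ∈ Finset.powersetCard k (Finset.range n),
          ENNReal.ofReal p₀ ^ k * ENNReal.ofReal (1 - p₀) ^ (n - k) := by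
        rw [Finset.sum_const, Finset.card_powersetCard, Finset.card_range, nsmul_eq_mul]
        rw [ENNReal.ofReal_mul (by positivity), ENNReal.ofReal_mul (by positivity),
          ENNReal.ofReal_pow hp₀0.le, ENNReal.ofReal_pow (by linarith),
          ENNReal.ofReal_natCast, mul_assoc]
    _ = ∑ A ∈ Finset.powersetCard k (Finset.range n), P (F A) :=
        (Finset.sum_congr rfl hFP).symm
    _ = P (⋃ A ∈ Finset.powersetCard k (Finset.range n), F A) :=
        (measure_biUnion_finset hdisj (fun A _ => hFmeas A)).symm
    _ ≤ P {ω | (n : ℝ) * q ≤ ∑ i ∈ Finset.range n, X i ω} :=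
        measure_mono (Set.iUnion₂_subset hFsub)

private lemma chernoff_bound {Ω : Type*} [MeasurableSpace Ω] (P : Measure Ω)
    [IsProbabilityMeasure P] (p₀ q : ℝ) (hp₀0 : 0 < p₀) (hp₀q : p₀ < q) (hq1 : q < 1)
    (X : ℕ → Ω → ℝ) (hmeas : ∀ i, Measurable (X i))
    (hindep : iIndepFun X P)
    (h01 : ∀ i ω, X i ω = 0 ∨ X i ω = 1)
    (hlaw : ∀ i, P {ω | X i ω = 1} = ENNReal.ofReal p₀) (n : ℕ) :
    (P {ω | (n : ℝ) * q ≤ ∑ i ∈ Finset.range n, X i ω}).toReal ≤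
      Real.exp (-(n:ℝ) * (q * Real.log (q / p₀) + (1 - q) * Real.log ((1 - q) / (1 - p₀)))) := by
  have hq0 : 0 < q := lt_trans hp₀0 hp₀q
  have h1q : 0 < 1 - q := by linarith
  have h1p : 0 < 1 - p₀ := by linarith
  set t := Real.log (q * (1 - p₀) / (p₀ * (1 - q))) with htdef
  have hupos : 0 < q * (1 - p₀) / (p₀ * (1 - q)) := by positivity
  have ht0 : 0 ≤ t := Real.log_nonneg (by rw [le_div_iff₀ (by positivity)]; nlinarith)
  have hXind : ∀ i, X i = (X i ⁻¹' {1}).indicator (fun _ => (1:ℝ)) := by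
    intro i; funext ω
    rcases h01 i ω with h | h <;> simp [Set.indicator_apply, h]
  have hXint : ∀ i, Integrable (X i) P := by
    intro i
    rw [hXind i]
    exact (integrable_const 1).indicator ((hmeas i) (measurableSet_singleton 1))
  have hXexp : ∀ i, ∫ ω, X i ω ∂P = p₀ := by
    intro i
    conv_lhs => rw [hXind i]
    rw [integral_indicator_const (1:ℝ) ((hmeas i) (measurableSet_singleton 1))]
    have : P (X i ⁻¹' {1}) = ENNReal.ofReal p₀ := hlaw i
    rw [measureReal_def, this, smul_eq_mul, mul_one, ENNReal.toReal_ofReal hp₀0.le]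
  have hptw : ∀ i ω, Real.exp (t * X i ω) = 1 + (Real.exp t - 1) * X i ω := by
    intro i ω
    rcases h01 i ω with h | h <;> simp [h]
  have hint_exp : ∀ i, Integrable (fun ω => Real.exp (t * X i ω)) P := by
    intro i
    have : (fun ω => Real.exp (t * X i ω)) = fun ω => 1 + (Real.exp t - 1) * X i ω := by
      funext ω; exact hptw i ω
    rw [this]
    exact (integrable_const 1).add ((hXint i).const_mul _)
  have hmgf : ∀ i, mgf (X i) P t = 1 + (Real.exp t - 1) * p₀ := by
    intro i
    rw [mgf]
    calc ∫ ω, Real.exp (t * X i ω) ∂P = ∫ ω, (1 + (Real.exp t - 1) * X i ω) ∂P := by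
          congr 1; funext ω; exact hptw i ω
      _ = 1 + (Real.exp t - 1) * p₀ := by
          rw [integral_add (integrable_const 1) ((hXint i).const_mul _), integral_const,
            integral_const_mul, hXexp i]
          simp
  have hset : {ω | (n:ℝ) * q ≤ ∑ i ∈ Finset.range n, X i ω} =
      {ω | (n:ℝ) * q ≤ (∑ i ∈ Finset.range n, X i) ω} := by
    simp [Finset.sum_apply]
  rw [hset]
  have hintsum : Integrable (fun ω => Real.exp (t * (∑ i ∈ Finset.range n, X i) ω)) P :=
    hindep.integrable_exp_mul_sum hmeas (fun i _ => hint_exp i)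
  refine (measure_ge_le_exp_mul_mgf ((n:ℝ) * q) ht0 hintsum).trans ?_
  rw [hindep.mgf_sum hmeas (Finset.range n)]
  rw [Finset.prod_congr rfl (fun i _ => hmgf i), Finset.prod_const, Finset.card_range]
  have hbase : 1 + (Real.exp t - 1) * p₀ = (1 - p₀) / (1 - q) := by
    rw [htdef, Real.exp_log hupos]
    field_simp
    ring
  have hbpos : (0:ℝ) < (1 - p₀) / (1 - q) := by positivity
  rw [hbase]
  have hpow : ((1 - p₀) / (1 - q)) ^ n = Real.exp ((n:ℝ) * Real.log ((1 - p₀) / (1 - q))) := by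
    rw [Real.exp_nat_mul, Real.exp_log hbpos]
  rw [hpow, ← Real.exp_add]
  apply le_of_eq
  congr 1
  rw [htdef, Real.log_div (by positivity) (by positivity),
    Real.log_mul (ne_of_gt hq0) (ne_of_gt h1p), Real.log_mul (ne_of_gt hp₀0) (ne_of_gt h1q),
    Real.log_div (ne_of_gt h1p) (ne_of_gt h1q), Real.log_div (ne_of_gt hq0) (ne_of_gt hp₀0),
    Real.log_div (ne_of_gt h1q) (ne_of_gt h1p)]
  ring

private lemma log_c_bound (p₀ : ℝ) (hp₀0 : 0 < p₀) (hp₀1 : p₀ < 1) (n k : ℕ)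
    (hk1 : 1 ≤ k) (hkn : k < n) :
    -Real.log ((n.choose k : ℝ) * p₀ ^ k * (1 - p₀) ^ (n - k)) ≤
      (n:ℝ) * (((k:ℝ)/n) * Real.log (((k:ℝ)/n) / p₀) +
        (1 - (k:ℝ)/n) * Real.log ((1 - (k:ℝ)/n) / (1 - p₀))) + Real.log ((n:ℝ)+1) := by
  have h1p : (0:ℝ) < 1 - p₀ := by linarith
  have hN : (0:ℝ) < n := by
    have : 0 < n := by omega
    exact_mod_cast this
  have hK : (0:ℝ) < k := by exact_mod_cast hk1
  have hM : (0:ℝ) < ((n-k:ℕ):ℝ) := by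
    have : 0 < n - k := by omega
    exact_mod_cast this
  have hMeq : ((n-k:ℕ):ℝ) = (n:ℝ) - k := by
    rw [Nat.cast_sub hkn.le]
  have hCpos : (0:ℝ) < (n.choose k:ℝ) := by exact_mod_cast Nat.choose_pos hkn.le
  have hcast : ((n:ℝ))^n ≤ ((n:ℝ)+1) * ((n.choose k : ℝ) * (k:ℝ)^k * ((n-k:ℕ):ℝ)^(n-k)) := by
    exact_mod_cast nat_max_term n k hkn.le
  have hlogc := Real.log_le_log (by positivity) hcast
  rw [Real.log_pow, Real.log_mul (by positivity) (by positivity),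
    Real.log_mul (by positivity) (by positivity),
    Real.log_mul (ne_of_gt hCpos) (by positivity), Real.log_pow, Real.log_pow] at hlogc
  rw [Real.log_mul (by positivity) (by positivity),
    Real.log_mul (ne_of_gt hCpos) (by positivity), Real.log_pow, Real.log_pow]
  have e1 : 1 - (k:ℝ)/n = ((n-k:ℕ):ℝ)/n := by
    rw [hMeq]; field_simp
  rw [e1]
  rw [Real.log_div (by positivity) (ne_of_gt hp₀0), Real.log_div (ne_of_gt hK) (ne_of_gt hN),
    Real.log_div (by positivity) (ne_of_gt h1p), Real.log_div (ne_of_gt hM) (ne_of_gt hN)]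
  have expand : (n:ℝ) * (((k:ℝ)/n) * (Real.log k - Real.log n - Real.log p₀) +
      (((n-k:ℕ):ℝ)/n) * (Real.log ((n-k:ℕ):ℝ) - Real.log n - Real.log (1-p₀))) =
      (k:ℝ) * (Real.log k - Real.log n - Real.log p₀) +
      ((n-k:ℕ):ℝ) * (Real.log ((n-k:ℕ):ℝ) - Real.log n - Real.log (1-p₀)) := by
    field_simp
  rw [expand]
  rw [hMeq] at hlogc ⊢
  nlinarith [hlogc]

theorem stmt_8 {Ω : Type*} [MeasurableSpace Ω] (P : MeasureTheory.Measure Ω)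
    [MeasureTheory.IsProbabilityMeasure P]
    (p₀ q : ℝ) (hp₀0 : 0 < p₀) (hp₀q : p₀ < q) (hq1 : q < 1)
    (X : ℕ → Ω → ℝ) (hmeas : ∀ i, Measurable (X i))
    (hindep : ProbabilityTheory.iIndepFun X P)
    (h01 : ∀ i ω, X i ω = 0 ∨ X i ω = 1)
    (hlaw : ∀ i, P {ω | X i ω = 1} = ENNReal.ofReal p₀) :
    Filter.Tendsto
      (fun n : ℕ =>
        -Real.log ((P {ω | (n : ℝ) * q ≤ ∑ i ∈ Finset.range n, X i ω}).toReal) / n)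
      Filter.atTop
      (nhds (q * Real.log (q / p₀) + (1 - q) * Real.log ((1 - q) / (1 - p₀)))) := by
  classical
  have hq0 : 0 < q := lt_trans hp₀0 hp₀q
  have h1q : 0 < 1 - q := by linarith
  have h1p : 0 < 1 - p₀ := by linarith
  have hp₀1 : p₀ < 1 := by linarith
  -- the ceiling sequence
  have hkle : ∀ n : ℕ, ⌈(n:ℝ)*q⌉₊ ≤ n := by
    intro n
    rw [Nat.ceil_le]
    nlinarith [Nat.cast_nonneg (α := ℝ) n]
  have hcpos : ∀ n : ℕ, 0 < (n.choose ⌈(n:ℝ)*q⌉₊ : ℝ) * p₀ ^ ⌈(n:ℝ)*q⌉₊ *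
      (1 - p₀) ^ (n - ⌈(n:ℝ)*q⌉₊) := by
    intro n
    have h1 : (0:ℝ) < (n.choose ⌈(n:ℝ)*q⌉₊ : ℝ) := by
      exact_mod_cast Nat.choose_pos (hkle n)
    positivity
  have hlowP : ∀ n : ℕ, (n.choose ⌈(n:ℝ)*q⌉₊ : ℝ) * p₀ ^ ⌈(n:ℝ)*q⌉₊ *
      (1 - p₀) ^ (n - ⌈(n:ℝ)*q⌉₊) ≤
      (P {ω | (n : ℝ) * q ≤ ∑ i ∈ Finset.range n, X i ω}).toReal := by
    intro n
    have h := lower_bound P p₀ hp₀0 hp₀1 X hmeas hindep h01 hlaw n ⌈(n:ℝ)*q⌉₊ (hkle n) q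
      (Nat.le_ceil _)
    have h2 := ENNReal.toReal_mono (measure_ne_top P _) h
    rwa [ENNReal.toReal_ofReal (hcpos n).le] at h2
  have hPpos : ∀ n : ℕ, 0 < (P {ω | (n : ℝ) * q ≤ ∑ i ∈ Finset.range n, X i ω}).toReal :=
    fun n => lt_of_lt_of_le (hcpos n) (hlowP n)
  -- lower eventual bound
  have hlower : ∀ᶠ n : ℕ in Filter.atTop,
      q * Real.log (q / p₀) + (1 - q) * Real.log ((1 - q) / (1 - p₀)) ≤
        -Real.log ((P {ω | (n : ℝ) * q ≤ ∑ i ∈ Finset.range n, X i ω}).toReal) / n := by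
    filter_upwards [Filter.eventually_ge_atTop 1] with n hn
    have hnpos : (0:ℝ) < n := by exact_mod_cast hn
    have hch := chernoff_bound P p₀ q hp₀0 hp₀q hq1 X hmeas hindep h01 hlaw n
    have hlog : Real.log ((P {ω | (n : ℝ) * q ≤ ∑ i ∈ Finset.range n, X i ω}).toReal) ≤
        -(n:ℝ) * (q * Real.log (q / p₀) + (1 - q) * Real.log ((1 - q) / (1 - p₀))) := by
      have := Real.log_le_log (hPpos n) hch
      rwa [Real.log_exp] at this
    rw [le_div_iff₀ hnpos]
    nlinarith [hlog]
  -- upper eventual bound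
  have hNq : ∀ᶠ n : ℕ in Filter.atTop, (1:ℝ)/(1-q) ≤ (n:ℝ) :=
    tendsto_natCast_atTop_atTop.eventually_ge_atTop _
  have hupper : ∀ᶠ n : ℕ in Filter.atTop,
      -Real.log ((P {ω | (n : ℝ) * q ≤ ∑ i ∈ Finset.range n, X i ω}).toReal) / n ≤
        ((⌈(n:ℝ)*q⌉₊:ℝ)/n) * Real.log ((((⌈(n:ℝ)*q⌉₊:ℝ))/n) / p₀) +
          (1 - (⌈(n:ℝ)*q⌉₊:ℝ)/n) * Real.log ((1 - (⌈(n:ℝ)*q⌉₊:ℝ)/n) / (1 - p₀)) +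
          Real.log ((n:ℝ)+1) / n := by
    filter_upwards [Filter.eventually_ge_atTop 1, hNq] with n hn1 hnq
    have hn0 : (0:ℝ) < n := by exact_mod_cast hn1
    have hk1 : 1 ≤ ⌈(n:ℝ)*q⌉₊ := Nat.ceil_pos.mpr (by positivity)
    have hkn : ⌈(n:ℝ)*q⌉₊ < n := by
      have h1 : ((⌈(n:ℝ)*q⌉₊):ℝ) < (n:ℝ)*q + 1 := Nat.ceil_lt_add_one (by positivity)
      have h2 : (1:ℝ) ≤ (n:ℝ)*(1-q) := by
        rw [div_le_iff₀ h1q] at hnq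
        linarith
      have h3 : ((⌈(n:ℝ)*q⌉₊):ℝ) < (n:ℝ) := by nlinarith
      exact_mod_cast h3
    have hstep1 : Real.log ((n.choose ⌈(n:ℝ)*q⌉₊ : ℝ) * p₀ ^ ⌈(n:ℝ)*q⌉₊ *
        (1 - p₀) ^ (n - ⌈(n:ℝ)*q⌉₊)) ≤
        Real.log ((P {ω | (n : ℝ) * q ≤ ∑ i ∈ Finset.range n, X i ω}).toReal) :=
      Real.log_le_log (hcpos n) (hlowP n)
    have hstep2 := log_c_bound p₀ hp₀0 hp₀1 n ⌈(n:ℝ)*q⌉₊ hk1 hkn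
    rw [div_le_iff₀ hn0]
    have heq : (((⌈(n:ℝ)*q⌉₊:ℝ)/n) * Real.log ((((⌈(n:ℝ)*q⌉₊:ℝ))/n) / p₀) +
          (1 - (⌈(n:ℝ)*q⌉₊:ℝ)/n) * Real.log ((1 - (⌈(n:ℝ)*q⌉₊:ℝ)/n) / (1 - p₀)) +
          Real.log ((n:ℝ)+1) / n) * n =
        (n:ℝ) * (((⌈(n:ℝ)*q⌉₊:ℝ)/n) * Real.log ((((⌈(n:ℝ)*q⌉₊:ℝ))/n) / p₀) +
          (1 - (⌈(n:ℝ)*q⌉₊:ℝ)/n) * Real.log ((1 - (⌈(n:ℝ)*q⌉₊:ℝ)/n) / (1 - p₀))) +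
          Real.log ((n:ℝ)+1) := by
      field_simp
    rw [heq]
    linarith
  -- convergence of the upper sequence
  have hr : Filter.Tendsto (fun n : ℕ => ((⌈(n:ℝ)*q⌉₊:ℝ))/n) Filter.atTop (nhds q) := by
    have hup : Filter.Tendsto (fun n : ℕ => q + 1/(n:ℝ)) Filter.atTop (nhds q) := by
      have h2 := tendsto_one_div_atTop_nhds_zero_nat.const_add q
      rwa [add_zero] at h2
    refine tendsto_of_tendsto_of_tendsto_of_le_of_le' tendsto_const_nhds hup ?_ ?_
    · filter_upwards [Filter.eventually_ge_atTop 1] with n hn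
      have hn0 : (0:ℝ) < n := by exact_mod_cast hn
      rw [le_div_iff₀ hn0]
      have := Nat.le_ceil ((n:ℝ)*q)
      linarith
    · filter_upwards [Filter.eventually_ge_atTop 1] with n hn
      have hn0 : (0:ℝ) < n := by exact_mod_cast hn
      rw [div_le_iff₀ hn0]
      have h1 : ((⌈(n:ℝ)*q⌉₊):ℝ) < (n:ℝ)*q + 1 := Nat.ceil_lt_add_one (by positivity)
      have : (q + 1/(n:ℝ)) * n = n * q + 1 := by field_simp
      rw [this]
      linarith
  have hcont : ContinuousAt (fun r : ℝ => r * Real.log (r / p₀) +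
      (1 - r) * Real.log ((1 - r) / (1 - p₀))) q := by
    have c1 : ContinuousAt (fun r : ℝ => Real.log (r / p₀)) q := by
      refine ContinuousAt.log ?_ ?_
      · exact continuousAt_id.div_const _
      · show q / p₀ ≠ 0
        positivity
    have c2 : ContinuousAt (fun r : ℝ => Real.log ((1 - r) / (1 - p₀))) q := by
      refine ContinuousAt.log ?_ ?_
      · exact ((continuous_const.sub continuous_id).continuousAt).div_const _
      · show (1 - q) / (1 - p₀) ≠ 0
        positivity
    exact (continuousAt_id.mul c1).add
      ((continuous_const.sub continuous_id).continuousAt.mul c2)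
  have h1 : Filter.Tendsto (fun n : ℕ => ((⌈(n:ℝ)*q⌉₊:ℝ)/n) * Real.log ((((⌈(n:ℝ)*q⌉₊:ℝ))/n) / p₀) +
      (1 - (⌈(n:ℝ)*q⌉₊:ℝ)/n) * Real.log ((1 - (⌈(n:ℝ)*q⌉₊:ℝ)/n) / (1 - p₀)))
      Filter.atTop
      (nhds (q * Real.log (q / p₀) + (1 - q) * Real.log ((1 - q) / (1 - p₀)))) :=
    hcont.tendsto.comp hr
  have h2 : Filter.Tendsto (fun n : ℕ => Real.log ((n:ℝ)+1) / n) Filter.atTop (nhds 0) := by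
    have ha : Filter.Tendsto (fun x : ℝ => Real.log x / x) Filter.atTop (nhds 0) :=
      Real.isLittleO_log_id_atTop.tendsto_div_nhds_zero
    have hb : Filter.Tendsto (fun x : ℝ => Real.log (x+1) / (x+1)) Filter.atTop (nhds 0) :=
      ha.comp (tendsto_atTop_add_const_right Filter.atTop 1 tendsto_id)
    have hc : Filter.Tendsto (fun x : ℝ => (x+1) / x) Filter.atTop (nhds 1) := by
      have h3 : Filter.Tendsto (fun x : ℝ => 1 + x⁻¹) Filter.atTop (nhds 1) := by
        have := tendsto_inv_atTop_zero (𝕜 := ℝ) |>.const_add (1:ℝ)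
        rwa [add_zero] at this
      refine h3.congr' ?_
      filter_upwards [Filter.eventually_gt_atTop 0] with x hx
      field_simp
    have hd := hb.mul hc
    rw [zero_mul] at hd
    have he : Filter.Tendsto (fun x : ℝ => Real.log (x+1) / x) Filter.atTop (nhds 0) := by
      refine Filter.Tendsto.congr' ?_ hd
      filter_upwards [Filter.eventually_gt_atTop 0] with x hx
      have hx1 : x + 1 ≠ 0 := by linarith
      field_simp
    exact he.comp tendsto_natCast_atTop_atTop
  have hu := h1.add h2
  rw [add_zero] at hu
  exact tendsto_of_tendsto_of_tendsto_of_le_of_le' tendsto_const_nhds hu hlower hupper
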